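/- Let (G,P) be an EDP instance and let v,a,b be vertices of G such that the neighborhood of v is exactly {a,b} with a ≠ b, the edge {a,b} is not in G, and v occurs in no terminal pair of P. Let G' be the graph obtained from G by deleting v and adding the edge {a,b} (i.e., suppressing the degree-2 vertex v). Then (G,P) is a YES-instance of EDP if and only if (G', P) is a YES-instance of EDP. -/
import Mathlib

open SimpleGraph

section Aux

variable {V : Type*} {G : SimpleGraph V} {v a b : V}

private lemma mem_compl_v {x : V} (h : x ≠ v) : x ∈ ({v}ᶜ : Set V) :=
  Set.mem_compl_singleton_iff.mpr h

private lemma v_not_mem_map (e : Sym2 ({v}ᶜ : Set V)) :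
    v ∉ Sym2.map Subtype.val e := by
  rw [Sym2.mem_map]
  rintro ⟨w, -, hw⟩
  exact Set.mem_compl_singleton_iff.mp w.2 hw

private lemma fwd (hva : G.Adj v a) (hvb : G.Adj v b)
    (hN : ∀ x, G.Adj v x → x = a ∨ x = b) (hnadj : ¬ G.Adj a b) :
    ∀ (n : ℕ) (x y : V) (hx : x ∈ ({v}ᶜ : Set V)) (hy : y ∈ ({v}ᶜ : Set V))
      (W : G.Walk x y), W.length ≤ n →
    ∃ W' : ((G.induce {v}ᶜ) ⊔ SimpleGraph.fromRel
        (fun p q : ({v}ᶜ : Set V) => (p : V) = a ∧ (q : V) = b)).Walk ⟨x, hx⟩ ⟨y, hy⟩,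
      (W.IsPath → (W'.support.map Subtype.val).Sublist W.support) ∧
      ∀ e' ∈ W'.edges, (Sym2.map Subtype.val e' ∈ W.edges) ∨
        (Sym2.map Subtype.val e' = s(a, b) ∧ s(a, v) ∈ W.edges) := by
  intro n
  induction n with
  | zero =>
    intro x y hx hy W hW
    cases W with
    | nil => exact ⟨.nil, fun _ => by simp, by simp⟩
    | cons h W1 => simp at hW
  | succ n ih =>
    intro x y hx hy W hW
    cases W with
    | nil => exact ⟨.nil, fun _ => by simp, by simp⟩
    | @cons _ z _ h W1 =>
      by_cases hz : z = v
      · cases W1 with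
        | nil => exact absurd hz (Set.mem_compl_singleton_iff.mp hy)
        | @cons _ w _ h2 W2 =>
          have h2' : G.Adj v w := hz ▸ h2
          have hw : w ∈ ({v}ᶜ : Set V) := mem_compl_v h2'.ne'
          have hxab : x = a ∨ x = b := hN x (hz ▸ h.symm)
          have hwab : w = a ∨ w = b := hN w h2'
          by_cases hxw : x = w
          · subst hxw
            obtain ⟨W', hp, he⟩ := ih x y hx hy W2
              (by simp only [Walk.length_cons] at hW ⊢; omega)
            refine ⟨W', fun hpath => absurd hpath ?_, fun e' he' => ?_⟩
            · intro hpth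
              rw [Walk.cons_isPath_iff] at hpth
              refine hpth.2 ?_
              rw [Walk.support_cons]
              exact List.mem_cons_of_mem _ W2.start_mem_support
            · rcases he e' he' with h1 | h1
              · exact Or.inl (by
                  simp only [Walk.edges_cons, List.mem_cons]; tauto)
              · exact Or.inr ⟨h1.1, by
                  simp only [Walk.edges_cons, List.mem_cons]; tauto⟩
          · obtain ⟨W', hp, he⟩ := ih w y hw hy W2
              (by simp only [Walk.length_cons] at hW ⊢; omega)
            have hxw' : (⟨x, hx⟩ : ({v}ᶜ : Set V)) ≠ ⟨w, hw⟩ :=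
              fun hh => hxw (congrArg Subtype.val hh)
            have hrel : ((x : V) = a ∧ (w : V) = b) ∨ ((w : V) = a ∧ (x : V) = b) := by
              rcases hxab with h3 | h3 <;> rcases hwab with h4 | h4
              · exact absurd (h3.trans h4.symm) hxw
              · exact Or.inl ⟨h3, h4⟩
              · exact Or.inr ⟨h4, h3⟩
              · exact absurd (h3.trans h4.symm) hxw
            have hadj : ((G.induce {v}ᶜ) ⊔ SimpleGraph.fromRel
                (fun p q : ({v}ᶜ : Set V) => (p : V) = a ∧ (q : V) = b)).Adj
                ⟨x, hx⟩ ⟨w, hw⟩ := by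
              rw [sup_adj, SimpleGraph.fromRel_adj]
              exact Or.inr ⟨hxw', hrel⟩
            refine ⟨Walk.cons hadj W', ?_, ?_⟩
            · intro hpath
              have hp2 : W2.IsPath := hpath.of_cons.of_cons
              simp only [Walk.support_cons, List.map_cons]
              exact ((hp hp2).cons z).cons₂ x
            · intro e' he'
              rw [Walk.edges_cons, List.mem_cons] at he'
              rcases he' with rfl | he'
              · refine Or.inr ⟨?_, ?_⟩
                · rw [Sym2.map_pair_eq]
                  rcases hrel with ⟨h3, h4⟩ | ⟨h3, h4⟩
                  · show s(x, w) = s(a, b)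
                    rw [h3, h4]
                  · show s(x, w) = s(a, b)
                    rw [h4, h3, Sym2.eq_swap]
                · simp only [Walk.edges_cons, List.mem_cons]
                  rcases hrel with ⟨h3, h4⟩ | ⟨h3, h4⟩
                  · exact Or.inl (by rw [← h3, ← hz])
                  · exact Or.inr (Or.inl (by rw [Sym2.eq_swap, ← h3, ← hz]))
              · rcases he e' he' with h1 | h1
                · exact Or.inl (by
                    simp only [Walk.edges_cons, List.mem_cons]; tauto)
                · exact Or.inr ⟨h1.1, by
                    simp only [Walk.edges_cons, List.mem_cons]; tauto⟩
      · have hz' : z ∈ ({v}ᶜ : Set V) := mem_compl_v hz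
        obtain ⟨W', hp, he⟩ := ih z y hz' hy W1
          (by simp only [Walk.length_cons] at hW; omega)
        have hadj : ((G.induce {v}ᶜ) ⊔ SimpleGraph.fromRel
            (fun p q : ({v}ᶜ : Set V) => (p : V) = a ∧ (q : V) = b)).Adj
            ⟨x, hx⟩ ⟨z, hz'⟩ := by
          rw [sup_adj]
          exact Or.inl h
        refine ⟨Walk.cons hadj W', ?_, ?_⟩
        · intro hpath
          simp only [Walk.support_cons, List.map_cons]
          exact (hp hpath.of_cons).cons₂ x
        · intro e' he'
          rw [Walk.edges_cons, List.mem_cons] at he'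
          rcases he' with rfl | he'
          · exact Or.inl (by simp [Walk.edges_cons])
          · rcases he e' he' with h1 | h1
            · exact Or.inl (by
                simp only [Walk.edges_cons, List.mem_cons]; tauto)
            · exact Or.inr ⟨h1.1, by
                simp only [Walk.edges_cons, List.mem_cons]; tauto⟩


private lemma bwd (hva : G.Adj v a) (hvb : G.Adj v b) :
    ∀ (x y : ({v}ᶜ : Set V))
      (W' : ((G.induce {v}ᶜ) ⊔ SimpleGraph.fromRel
        (fun p q : ({v}ᶜ : Set V) => (p : V) = a ∧ (q : V) = b)).Walk x y),
    ∃ W : G.Walk ↑x ↑y,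
      (∀ u ∈ W.support, u = v ∨ u ∈ W'.support.map Subtype.val) ∧
      ((∀ e' ∈ W'.edges, Sym2.map Subtype.val e' ≠ s(a, b)) → v ∉ W.support) ∧
      (W'.IsPath → W.IsPath) ∧
      (∀ e ∈ W.edges,
        (∃ e' ∈ W'.edges, e = Sym2.map Subtype.val e') ∨
        ((∃ e' ∈ W'.edges, Sym2.map Subtype.val e' = s(a, b)) ∧
          (e = s(a, v) ∨ e = s(v, b)))) := by
  intro x y W'
  induction W' with
  | @nil u =>
    refine ⟨.nil, by simp, ?_, fun _ => Walk.IsPath.nil, by simp⟩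
    intro _
    simp only [Walk.support_nil, List.mem_singleton]
    exact fun hh => Set.mem_compl_singleton_iff.mp u.2 hh.symm
  | @cons x q y h rest ih =>
    obtain ⟨W1, hsupp, hv, hpath, hedge⟩ := ih
    rw [sup_adj] at h
    rcases h with hG | hR
    · -- ordinary edge
      have hG' : G.Adj ↑x ↑q := hG
      refine ⟨Walk.cons hG' W1, ?_, ?_, ?_, ?_⟩
      · intro u hu
        rw [Walk.support_cons, List.mem_cons] at hu
        rcases hu with rfl | hu
        · exact Or.inr (by simp [Walk.support_cons])
        · rcases hsupp u hu with h1 | h1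
          · exact Or.inl h1
          · exact Or.inr (by
              simp only [Walk.support_cons, List.map_cons, List.mem_cons]; tauto)
      · intro H
        rw [Walk.support_cons, List.mem_cons]
        rintro (h1 | h1)
        · exact Set.mem_compl_singleton_iff.mp x.2 h1.symm
        · refine hv (fun e' he' => H e' ?_) h1
          rw [Walk.edges_cons, List.mem_cons]
          exact Or.inr he'
      · intro hpth
        rw [Walk.cons_isPath_iff] at hpth ⊢
        refine ⟨hpath hpth.1, ?_⟩
        intro hmem
        rcases hsupp _ hmem with h1 | h1
        · exact Set.mem_compl_singleton_iff.mp x.2 h1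
        · rw [List.mem_map] at h1
          obtain ⟨u', hu', hval⟩ := h1
          exact hpth.2 (Subtype.val_injective hval ▸ hu')
      · intro e he
        rw [Walk.edges_cons, List.mem_cons] at he
        rcases he with rfl | he
        · exact Or.inl ⟨s(x, q), by simp [Walk.edges_cons], (Sym2.map_pair_eq _ _ _).symm⟩
        · rcases hedge e he with ⟨e', he', heq⟩ | ⟨⟨e', he', heq⟩, hc⟩
          · exact Or.inl ⟨e', by rw [Walk.edges_cons, List.mem_cons]; exact Or.inr he', heq⟩
          · exact Or.inr ⟨⟨e', by rw [Walk.edges_cons, List.mem_cons]; exact Or.inr he', heq⟩, hc⟩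
    · -- the new edge {a, b}
      rw [SimpleGraph.fromRel_adj] at hR
      obtain ⟨hne, hrel⟩ := hR
      have h1 : G.Adj ↑x v := by
        rcases hrel with ⟨h3, _⟩ | ⟨_, h3⟩ <;> rw [h3]
        · exact hva.symm
        · exact hvb.symm
      have h2 : G.Adj v ↑q := by
        rcases hrel with ⟨_, h3⟩ | ⟨h3, _⟩ <;> rw [h3]
        · exact hvb
        · exact hva
      have key : Sym2.map Subtype.val s(x, q) = s(a, b) := by
        rw [Sym2.map_pair_eq]
        rcases hrel with ⟨h3, h4⟩ | ⟨h3, h4⟩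
        · rw [h3, h4]
        · rw [h3, h4, Sym2.eq_swap]
      refine ⟨Walk.cons h1 (Walk.cons h2 W1), ?_, ?_, ?_, ?_⟩
      · intro u hu
        simp only [Walk.support_cons, List.mem_cons] at hu
        rcases hu with rfl | rfl | hu
        · exact Or.inr (by simp [Walk.support_cons])
        · exact Or.inl rfl
        · rcases hsupp u hu with h3 | h3
          · exact Or.inl h3
          · exact Or.inr (by
              simp only [Walk.support_cons, List.map_cons, List.mem_cons]; tauto)
      · intro H
        exact absurd key (H s(x, q) (by simp [Walk.edges_cons]))
      · intro hpth
        rw [Walk.cons_isPath_iff] at hpth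
        obtain ⟨hrp, hxs⟩ := hpth
        have hAB : ∀ e' ∈ rest.edges, Sym2.map Subtype.val e' ≠ s(a, b) := by
          intro e' he' heq
          have : e' = s(x, q) :=
            Sym2.map.injective Subtype.val_injective (heq.trans key.symm)
          subst this
          exact hxs (rest.fst_mem_support_of_mem_edges he')
        have hvW1 : v ∉ W1.support := hv hAB
        have hW1p : W1.IsPath := hpath hrp
        have hxW1 : (↑x : V) ∉ W1.support := by
          intro hmem
          rcases hsupp _ hmem with h3 | h3
          · exact Set.mem_compl_singleton_iff.mp x.2 h3
          · rw [List.mem_map] at h3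
            obtain ⟨u', hu', hval⟩ := h3
            exact hxs (Subtype.val_injective hval ▸ hu')
        rw [Walk.cons_isPath_iff, Walk.cons_isPath_iff]
        refine ⟨⟨hW1p, hvW1⟩, ?_⟩
        rw [Walk.support_cons, List.mem_cons]
        rintro (h3 | h3)
        · exact Set.mem_compl_singleton_iff.mp x.2 h3
        · exact hxW1 h3
      · intro e he
        simp only [Walk.edges_cons, List.mem_cons] at he
        rcases he with rfl | rfl | he
        · refine Or.inr ⟨⟨s(x, q), by simp [Walk.edges_cons], key⟩, ?_⟩
          rcases hrel with ⟨h3, _⟩ | ⟨_, h3⟩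
          · exact Or.inl (by rw [h3])
          · exact Or.inr (by rw [h3, Sym2.eq_swap])
        · refine Or.inr ⟨⟨s(x, q), by simp [Walk.edges_cons], key⟩, ?_⟩
          rcases hrel with ⟨_, h3⟩ | ⟨h3, _⟩
          · exact Or.inr (by rw [h3])
          · exact Or.inl (by rw [h3, Sym2.eq_swap])
        · rcases hedge e he with ⟨e', he', heq⟩ | ⟨⟨e', he', heq⟩, hc⟩
          · exact Or.inl ⟨e', by rw [Walk.edges_cons, List.mem_cons]; exact Or.inr he', heq⟩
          · exact Or.inr ⟨⟨e', by rw [Walk.edges_cons, List.mem_cons]; exact Or.inr he', heq⟩, hc⟩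

end Aux

/-- A solution to an instance `(G, P)` of the Edge Disjoint Paths problem:
a family of paths, one per terminal pair, that are pairwise edge-disjoint. -/
def EDPSolution {V ι : Type*} (G : SimpleGraph V) (P : ι → V × V)
    (W : ∀ i : ι, G.Walk (P i).1 (P i).2) : Prop :=
  (∀ i, (W i).IsPath) ∧
    ∀ i j, i ≠ j → ∀ e ∈ (W i).edges, e ∉ (W j).edges

/-- `(G, P)` is a YES-instance of the Edge Disjoint Paths problem. -/
def EDPYes {V ι : Type*} (G : SimpleGraph V) (P : ι → V × V) : Prop :=
  ∃ W : ∀ i : ι, G.Walk (P i).1 (P i).2, EDPSolution G P W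

/-- Suppressing a degree-2 non-terminal vertex `v` with neighborhood exactly
`{a, b}`, where `a ≠ b` and `{a, b}` is not an edge of `G`, preserves the
answer to EDP: delete `v` and add the edge `{a, b}`. -/
theorem suppress_degree_two {V : Type*} (G : SimpleGraph V) {m : ℕ}
    (P : Fin m → V × V) (v a b : V)
    (hva : G.Adj v a) (hvb : G.Adj v b) (hab : a ≠ b)
    (hN : ∀ x, G.Adj v x → x = a ∨ x = b) (hnadj : ¬ G.Adj a b)
    (hocc : ∀ i, (P i).1 ≠ v ∧ (P i).2 ≠ v) :
    EDPYes G P ↔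
      EDPYes
        ((G.induce {v}ᶜ) ⊔
          SimpleGraph.fromRel (fun p q => (p : V) = a ∧ (q : V) = b))
        (fun i => (⟨(P i).1, (hocc i).1⟩, ⟨(P i).2, (hocc i).2⟩)) := by
  constructor
  · rintro ⟨W, hWp, hWd⟩
    choose W' h1 h2 using fun i =>
      fwd hva hvb hN hnadj (W i).length (P i).1 (P i).2
        (mem_compl_v (hocc i).1) (mem_compl_v (hocc i).2) (W i) le_rfl
    refine ⟨W', fun i => ?_, fun i j hij e' hei hej => ?_⟩
    · exact ((W' i).isPath_def).mpr
        (((h1 i (hWp i)).nodup ((hWp i).support_nodup)).of_map)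
    · rcases h2 i e' hei with hI | ⟨hIeq, hIa⟩ <;>
        rcases h2 j e' hej with hJ | ⟨hJeq, hJa⟩
      · exact hWd i j hij _ hI hJ
      · exact hnadj ((W i).adj_of_mem_edges (hJeq ▸ hI))
      · exact hnadj ((W j).adj_of_mem_edges (hIeq ▸ hJ))
      · exact hWd i j hij _ hIa hJa
  · rintro ⟨W', h'p, h'd⟩
    choose W hsupp hv hp he using fun i => bwd hva hvb _ _ (W' i)
    refine ⟨W, fun i => hp i (h'p i), fun i j hij e hei hej => ?_⟩
    rcases he i e hei with ⟨e', he', rfl⟩ | ⟨⟨e1, he1, hm1⟩, hc1⟩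
    · rcases he j _ hej with ⟨f', hf', hfeq⟩ | ⟨⟨f1, hf1, hm2⟩, hc2⟩
      · have hef : e' = f' := Sym2.map.injective Subtype.val_injective hfeq
        exact h'd i j hij e' he' (hef ▸ hf')
      · exact v_not_mem_map e' (by rcases hc2 with h | h <;> rw [h] <;> simp)
    · rcases he j e hej with ⟨f', hf', hfeq⟩ | ⟨⟨f1, hf1, hm2⟩, hc2⟩
      · exact v_not_mem_map f' (by rcases hc1 with h | h <;> rw [← hfeq, h] <;> simp)
      · have hef : e1 = f1 := Sym2.map.injective Subtype.val_injective (hm1.trans hm2.symm)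
        exact h'd i j hij e1 he1 (hef ▸ hf1)
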